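/- arXiv:2212.06534 — 3 statements merged into one kernel-verified Lean document; each statement's English description precedes it below -/
import Mathlib

section
/- If f, g ∈ L²(ℝⁿ) have compact supports and f*g = 0 almost everywhere on ℝⁿ, then f = 0 almost everywhere or g = 0 almost everywhere (i.e., convolution of compactly supported L² functions has no zero divisors). -/
open MeasureTheory Set Filter Pointwise

/-- Convolution of two real-valued functions on ℝⁿ. -/
noncomputable def conv {n : ℕ} (f g : (Fin n → ℝ) → ℝ) : (Fin n → ℝ) → ℝ :=
  fun s => ∫ t, f (s - t) * g t

/-- Essential support (w.r.t. Lebesgue measure) of a function on ℝⁿ. -/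
noncomputable def essSupp {n : ℕ} (f : (Fin n → ℝ) → ℝ) : Set (Fin n → ℝ) :=
  {x | ∀ r > 0, volume {y ∈ Metric.ball x r | f y ≠ 0} ≠ 0}

open Complex Real
open scoped FourierTransform RealInnerProductSpace Convolution Topology

namespace ConvAux

theorem ae_eq_zero_outside_essSupp {n : ℕ} (f : (Fin n → ℝ) → ℝ) :
    ∀ᵐ x, x ∉ essSupp f → f x = 0 := by
  rw [MeasureTheory.ae_iff]
  have : {x | ¬(x ∉ essSupp f → f x = 0)} = {x | x ∉ essSupp f ∧ f x ≠ 0} := by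
    ext x; simp [Classical.not_imp]
  rw [this]
  apply measure_null_of_locally_null
  rintro x ⟨hx, -⟩
  simp only [essSupp, mem_setOf_eq, not_forall] at hx
  obtain ⟨r, hr, hr0⟩ := hx
  rw [not_not] at hr0
  refine ⟨{x | x ∉ essSupp f ∧ f x ≠ 0} ∩ Metric.ball x r, inter_mem_nhdsWithin _ (Metric.ball_mem_nhds x hr), ?_⟩
  refine measure_mono_null (fun y hy => ?_) hr0
  exact ⟨hy.2, hy.1.2⟩

theorem analytic_integral_exp {α : Type*} [MeasurableSpace α] {μ : Measure α}
    (c : α → ℂ) (s : α → ℝ) (hc : Integrable c μ)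
    (hs : AEStronglyMeasurable s μ) {B : ℝ} (hB0 : 0 ≤ B) (hB : ∀ x, |s x| ≤ B) :
    AnalyticOnNhd ℝ (fun t : ℝ => ∫ x, Complex.exp (↑(t * s x) * Complex.I) * c x ∂μ)
      Set.univ := by
  set h : ℝ → ℂ := fun t : ℝ => ∫ x, Complex.exp (↑(t * s x) * Complex.I) * c x ∂μ with hh
  intro t₀ _
  have habs : ∀ r : ℝ, ‖((r : ℂ) * Complex.I)‖ = |r| := by intro r; simp
  have hmsm : ∀ t : ℝ, AEStronglyMeasurable (fun x => ((t * s x : ℝ) : ℂ) * Complex.I) μ := by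
    intro t
    exact (Complex.continuous_ofReal.mul continuous_const).comp_aestronglyMeasurable
      (hs.const_mul t)
  have hexpsm : ∀ t : ℝ, AEStronglyMeasurable
      (fun x => Complex.exp (↑(t * s x) * Complex.I)) μ := by
    intro t
    exact Complex.continuous_exp.comp_aestronglyMeasurable (hmsm t)
  have hexp_norm : ∀ (t : ℝ) (x : α), ‖Complex.exp (↑(t * s x) * Complex.I)‖ = 1 :=
    fun t x => Complex.norm_exp_ofReal_mul_I _
  set c' : α → ℂ := fun x => Complex.exp (↑(t₀ * s x) * Complex.I) * c x with hc'def
  have hc' : Integrable c' μ :=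
    Integrable.bdd_mul hc (hexpsm t₀) (Filter.Eventually.of_forall fun x => le_of_eq (hexp_norm t₀ x))
  have hc'_norm : ∀ x, ‖c' x‖ = ‖c x‖ := by
    intro x
    rw [hc'def]
    simp only [norm_mul, hexp_norm t₀ x, one_mul]
  set C : ℝ := ∫ x, ‖c x‖ ∂μ with hC
  have hC0 : 0 ≤ C := integral_nonneg fun x => norm_nonneg _
  have hsIsm : AEStronglyMeasurable (fun x => ((s x : ℂ) * Complex.I)) μ := by
    simpa using hmsm 1
  have hIk : ∀ k : ℕ, Integrable (fun x => ((s x : ℂ) * Complex.I) ^ k * c' x) μ := by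
    intro k
    refine Integrable.bdd_mul (c := B ^ k) hc' (hsIsm.pow k) (Filter.Eventually.of_forall fun x => ?_)
    rw [norm_pow, habs]
    exact pow_le_pow_left₀ (abs_nonneg _) (hB x) k
  have hIk_norm : ∀ k : ℕ, ∫ x, ‖((s x : ℂ) * Complex.I) ^ k * c' x‖ ∂μ ≤ B ^ k * C := by
    intro k
    rw [hC, ← integral_const_mul]
    refine integral_mono_of_nonneg (Filter.Eventually.of_forall fun x => norm_nonneg _)
      (hc.norm.const_mul _) (Filter.Eventually.of_forall fun x => ?_)
    show ‖((s x : ℂ) * Complex.I) ^ k * c' x‖ ≤ B ^ k * ‖c x‖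
    rw [norm_mul, hc'_norm, norm_pow, habs]
    exact mul_le_mul_of_nonneg_right (pow_le_pow_left₀ (abs_nonneg _) (hB x) k) (norm_nonneg _)
  set a : ℕ → ℂ := fun k => ((Nat.factorial k : ℝ))⁻¹ • ∫ x, ((s x : ℂ) * Complex.I) ^ k * c' x ∂μ
    with ha
  have hak : ∀ k, ‖a k‖ ≤ C * (B ^ k / Nat.factorial k) := by
    intro k
    rw [ha]
    simp only [norm_smul, norm_inv, Real.norm_natCast]
    calc ((Nat.factorial k : ℝ))⁻¹ * ‖∫ x, ((s x : ℂ) * Complex.I) ^ k * c' x ∂μ‖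
        ≤ ((Nat.factorial k : ℝ))⁻¹ * (B ^ k * C) := by
          refine mul_le_mul_of_nonneg_left ?_ (by positivity)
          exact (norm_integral_le_integral_norm _).trans (hIk_norm k)
      _ = C * (B ^ k / Nat.factorial k) := by ring
  set p : FormalMultilinearSeries ℝ ℝ ℂ :=
    fun k => ContinuousMultilinearMap.mkPiRing ℝ (Fin k) (a k) with hp
  have hpnorm : ∀ k, ‖p k‖ = ‖a k‖ := fun k => ContinuousMultilinearMap.norm_mkPiRing _
  have main : HasFPowerSeriesOnBall h p t₀ 1 := by
    constructor
    · -- radius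
      refine FormalMultilinearSeries.le_radius_of_summable_norm p (r := 1) ?_
      refine Summable.of_nonneg_of_le (fun k => by positivity) (fun k => ?_)
        ((Real.summable_pow_div_factorial B).mul_left C)
      rw [hpnorm]
      simpa using hak k
    · exact one_pos
    · intro y hy
      set Fk : ℕ → α → ℂ := fun k x =>
        ((↑(y * s x) * Complex.I) ^ k / (Nat.factorial k : ℂ)) * c' x with hFk
      have hFk_int : ∀ k, Integrable (Fk k) μ := by
        intro k
        have hsm2 : AEStronglyMeasurable
            (fun x => (↑(y * s x) * Complex.I) ^ k / (Nat.factorial k : ℂ)) μ := by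
          simp only [div_eq_mul_inv]
          exact ((hmsm y).pow k).mul_const _
        refine Integrable.bdd_mul (c := (|y| * B) ^ k / Nat.factorial k) hc' hsm2 (Filter.Eventually.of_forall fun x => ?_)
        rw [norm_div, norm_pow, habs, Complex.norm_natCast]
        have h1 : |y * s x| ≤ |y| * B := by
          rw [abs_mul]; exact mul_le_mul_of_nonneg_left (hB x) (abs_nonneg y)
        have hkpos : (0:ℝ) < Nat.factorial k := Nat.cast_pos.mpr (Nat.factorial_pos k)
        exact (div_le_div_iff_of_pos_right hkpos).mpr (pow_le_pow_left₀ (abs_nonneg _) h1 k)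
      have hFk_norm : ∀ k, ∫ x, ‖Fk k x‖ ∂μ ≤ C * ((|y| * B) ^ k / Nat.factorial k) := by
        intro k
        rw [hC, mul_comm C, ← integral_const_mul]
        refine integral_mono_of_nonneg (Filter.Eventually.of_forall fun x => norm_nonneg _)
          (hc.norm.const_mul _) (Filter.Eventually.of_forall fun x => ?_)
        show ‖Fk k x‖ ≤ (|y| * B) ^ k / (Nat.factorial k) * ‖c x‖
        rw [hFk]
        simp only
        rw [norm_mul, hc'_norm, norm_div, norm_pow, habs, Complex.norm_natCast]
        have h1 : |y * s x| ≤ |y| * B := by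
          rw [abs_mul]; exact mul_le_mul_of_nonneg_left (hB x) (abs_nonneg y)
        have hkpos : (0:ℝ) < Nat.factorial k := Nat.cast_pos.mpr (Nat.factorial_pos k)
        exact mul_le_mul_of_nonneg_right
          ((div_le_div_iff_of_pos_right hkpos).mpr (pow_le_pow_left₀ (abs_nonneg _) h1 k)) (norm_nonneg _)
      have hFk_sum : Summable fun k => ∫ x, ‖Fk k x‖ ∂μ := by
        refine Summable.of_nonneg_of_le
          (fun k => integral_nonneg fun x => norm_nonneg _) (fun k => hFk_norm k)
          ((Real.summable_pow_div_factorial (|y| * B)).mul_left C)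
      have key := hasSum_integral_of_summable_integral_norm hFk_int hFk_sum
      -- identify the tsum
      have htsum : ∀ x, (∑' k, Fk k x) = Complex.exp (↑((t₀ + y) * s x) * Complex.I) * c x := by
        intro x
        rw [hFk]
        simp only
        rw [tsum_mul_right]
        have hexp : (∑' k, (↑(y * s x) * Complex.I) ^ k / (Nat.factorial k : ℂ))
            = Complex.exp (↑(y * s x) * Complex.I) := by
          rw [Complex.exp_eq_exp_ℂ, NormedSpace.exp_eq_tsum_div]
        rw [hexp, hc'def]
        simp only
        rw [← mul_assoc, ← Complex.exp_add]
        congr 2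
        push_cast
        ring
      -- identify the terms
      have hterm : ∀ k, (∫ x, Fk k x ∂μ) = (p k) fun _ => y := by
        intro k
        have h1 : (∫ x, Fk k x ∂μ) = ((y:ℂ) ^ k / (Nat.factorial k : ℂ))
            * ∫ x, ((s x : ℂ) * Complex.I) ^ k * c' x ∂μ := by
          rw [← integral_const_mul]
          refine integral_congr_ae (Filter.Eventually.of_forall fun x => ?_)
          show Fk k x = _
          rw [hFk]
          simp only
          push_cast
          ring
        rw [h1, hp]
        simp only [ContinuousMultilinearMap.mkPiRing_apply, Finset.prod_const,
          Finset.card_univ, Fintype.card_fin, ha]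
        rw [smul_smul, Complex.real_smul]
        push_cast
        ring
      have : h (t₀ + y) = ∫ x, (∑' k, Fk k x) ∂μ := by
        rw [hh]
        simp only
        exact integral_congr_ae (Filter.Eventually.of_forall fun x => (htsum x).symm)
      rw [this]
      exact HasSum.congr_fun key fun k => (hterm k).symm
  exact main.analyticAt

variable {n : ℕ}

local notation "E" => EuclideanSpace ℝ (Fin n)

theorem fourier_eq_mul (h : E → ℂ) (w : E) :
    𝓕 h w = ∫ x, (𝐞 (-⟪x, w⟫) : ℂ) * h x := by
  rw [Real.fourier_eq]
  simp_rw [Circle.smul_def, smul_eq_mul]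

/-- Fourier transform turns convolution into multiplication. -/
theorem fourier_conv (F G : E → ℂ) (hF : Integrable F) (hG : Integrable G) (ξ : E) :
    𝓕 (F ⋆[ContinuousLinearMap.mul ℝ ℂ] G) ξ = 𝓕 F ξ * 𝓕 G ξ := by
  set L := ContinuousLinearMap.mul ℝ ℂ with hL
  have h1 : 𝓕 (F ⋆[L] G) ξ
      = ∫ x, ∫ t, (𝐞 (-⟪x, ξ⟫) : ℂ) * (F t * G (x - t)) ∂(volume) ∂(volume) := by
    rw [fourier_eq_mul]
    congr 1
    funext x
    rw [convolution_def, ← integral_const_mul]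
    rfl
  rw [h1]
  have hprod : Integrable (fun p : E × E => F p.2 * G (p.1 - p.2))
      ((volume : Measure E).prod volume) := hF.convolution_integrand L hG
  have hprod' : Integrable (fun p : E × E => (𝐞 (-⟪p.1, ξ⟫) : ℂ) * (F p.2 * G (p.1 - p.2)))
      ((volume : Measure E).prod volume) := by
    refine Integrable.mono' hprod.norm ?_ (Filter.Eventually.of_forall fun p => ?_)
    · apply AEStronglyMeasurable.mul ?_ hprod.aestronglyMeasurable
      apply Continuous.aestronglyMeasurable
      exact continuous_subtype_val.comp (Real.continuous_fourierChar.comp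
        ((continuous_fst.inner continuous_const).neg))
    · rw [norm_mul]
      simp [Circle.norm_coe]
  rw [integral_integral_swap hprod']
  have h2 : ∀ t : E, ∫ x, (𝐞 (-⟪x, ξ⟫) : ℂ) * (F t * G (x - t)) ∂(volume)
      = ((𝐞 (-⟪t, ξ⟫) : ℂ) * F t) * 𝓕 G ξ := by
    intro t
    have ht : ∫ x, (𝐞 (-⟪x, ξ⟫) : ℂ) * (F t * G (x - t)) ∂(volume)
        = ∫ y, (𝐞 (-⟪y + t, ξ⟫) : ℂ) * (F t * G y) ∂(volume) := by
      rw [← integral_add_right_eq_self (μ := (volume : Measure E))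
        (fun x => (𝐞 (-⟪x, ξ⟫) : ℂ) * (F t * G (x - t))) t]
      simp
    rw [ht]
    have hsplit : ∀ y : E, (𝐞 (-⟪y + t, ξ⟫) : ℂ) * (F t * G y)
        = ((𝐞 (-⟪t, ξ⟫) : ℂ) * F t) * ((𝐞 (-⟪y, ξ⟫) : ℂ) * G y) := by
      intro y
      rw [inner_add_left, neg_add, AddChar.map_add_eq_mul]
      push_cast
      ring
    rw [integral_congr_ae (Filter.Eventually.of_forall hsplit), integral_const_mul,
      fourier_eq_mul]
  rw [integral_congr_ae (Filter.Eventually.of_forall h2), integral_mul_const,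
    fourier_eq_mul G, fourier_eq_mul F]

/-- Analyticity of the Fourier transform of a boundedly supported function, along lines. -/
theorem fourier_analytic_line (G : E → ℂ) (hG : Integrable G) {R : ℝ}
    (hsupp : ∀ x, G x ≠ 0 → ‖x‖ ≤ R) (ξ₀ d : E) :
    AnalyticOnNhd ℝ (fun t : ℝ => 𝓕 G (ξ₀ + t • d)) Set.univ := by
  have hR : 0 ≤ R ∨ ∀ x, G x = 0 := by
    by_cases h : ∀ x, G x = 0
    · exact Or.inr h
    · push_neg at h
      obtain ⟨x, hx⟩ := h
      exact Or.inl ((norm_nonneg x).trans (hsupp x hx))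
  rcases hR with hR | hR
  swap
  · -- G is identically zero
    have : (fun t : ℝ => 𝓕 G (ξ₀ + t • d)) = fun _ => 0 := by
      funext t
      rw [Real.fourier_eq]
      simp [hR]
    rw [this]
    exact analyticOnNhd_const
  set B : ℝ := 2 * π * R * ‖d‖ + 1 with hBdef
  have hB0 : 0 ≤ B := by positivity
  set s : E → ℝ := fun v => max (-B) (min B (-2 * π * ⟪v, d⟫)) with hsdef
  set c : E → ℂ := fun v => Complex.exp (↑(-2 * π * ⟪v, ξ₀⟫) * Complex.I) * G v with hcdef
  have hnorm1 : ∀ r : ℝ, ‖Complex.exp (↑r * Complex.I)‖ = 1 :=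
    fun r => Complex.norm_exp_ofReal_mul_I r
  have hc : Integrable c := by
    refine Integrable.bdd_mul (c := 1) hG ?_ (Filter.Eventually.of_forall fun x => le_of_eq (hnorm1 _))
    apply Continuous.aestronglyMeasurable
    exact Complex.continuous_exp.comp
      ((Complex.continuous_ofReal.comp
        ((continuous_const.mul ((continuous_id.inner continuous_const))))).mul continuous_const)
  have hscont : Continuous s := by
    apply continuous_const.max
    apply continuous_const.min
    exact continuous_const.mul (continuous_id.inner continuous_const)
  have hB : ∀ v, |s v| ≤ B := by
    intro v
    rw [abs_le]
    constructor
    · exact le_max_left _ _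
    · exact max_le (by linarith) (min_le_left _ _)
  have key : ∀ t : ℝ, 𝓕 G (ξ₀ + t • d) = ∫ v, Complex.exp (↑(t * s v) * Complex.I) * c v := by
    intro t
    rw [Real.fourier_eq']
    refine integral_congr_ae (Filter.Eventually.of_forall fun v => ?_)
    rcases eq_or_ne (G v) 0 with hv | hv
    · simp [hcdef, hv, smul_eq_mul]
    · have hsv : s v = -2 * π * ⟪v, d⟫ := by
        have habs : |(-2) * π * ⟪v, d⟫| ≤ B := by
          rw [hBdef]
          have : |⟪v, d⟫| ≤ R * ‖d‖ := by
            refine (abs_real_inner_le_norm v d).trans ?_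
            exact mul_le_mul_of_nonneg_right (hsupp v hv) (norm_nonneg d)
          have h2 : |(-2) * π * ⟪v, d⟫| = 2 * π * |⟪v, d⟫| := by
            rw [abs_mul, abs_mul]
            simp [abs_of_pos Real.pi_pos]
          rw [h2]
          have h3 := mul_le_mul_of_nonneg_left this (by positivity : (0:ℝ) ≤ 2 * π)
          linarith
        rw [hsdef]
        simp only
        rw [min_eq_right (abs_le.mp habs).2, max_eq_right (abs_le.mp habs).1]
      simp only [smul_eq_mul]
      rw [hsv, hcdef]
      simp only
      rw [← mul_assoc, ← Complex.exp_add]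
      congr 2
      rw [inner_add_right, real_inner_smul_right]
      push_cast
      ring
  have : (fun t : ℝ => 𝓕 G (ξ₀ + t • d))
      = fun t : ℝ => ∫ v, Complex.exp (↑(t * s v) * Complex.I) * c v := funext key
  rw [this]
  exact analytic_integral_exp c s hc hscont.aestronglyMeasurable hB0 hB

/-- Injectivity of the Fourier transform on L¹. -/
theorem fourier_inj (G : E → ℂ) (hG : Integrable G)
    (h : ∀ ξ, 𝓕 G ξ = 0) : G =ᵐ[volume] 0 := by
  -- mollify with bump functions
  set φ : ℕ → ContDiffBump (0 : E) := fun k =>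
    ⟨(k + 1 : ℝ)⁻¹, 2 * (k + 1 : ℝ)⁻¹, by positivity, by
      nlinarith [inv_pos.mpr (by positivity : (0:ℝ) < (k + 1 : ℝ))]⟩ with hφ
  have hφout : Tendsto (fun k => (φ k).rOut) atTop (𝓝 0) := by
    rw [hφ]
    simp only
    rw [show (0:ℝ) = 2 * 0 by ring]
    exact (tendsto_one_div_add_atTop_nhds_zero_nat.congr (by
      intro k; rw [one_div])).const_mul 2
  have hφK : ∀ᶠ k in atTop, (φ k).rOut ≤ 2 * (φ k).rIn :=
    Filter.Eventually.of_forall fun k => le_of_eq rfl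
  have hu0 : ∀ k, ((φ k).normed volume ⋆[ContinuousLinearMap.lsmul ℝ ℝ] G) = 0 := by
    intro k
    set Φ : E → ℂ := fun x => ((φ k).normed volume x : ℂ) with hΦ
    have hΦint : Integrable Φ := ((φ k).integrable_normed).ofReal
    have hconv_eq : ((φ k).normed volume ⋆[ContinuousLinearMap.lsmul ℝ ℝ] G)
        = (Φ ⋆[ContinuousLinearMap.mul ℝ ℂ] G) := by
      funext x
      rw [convolution_def, convolution_def]
      refine integral_congr_ae (Filter.Eventually.of_forall fun t => ?_)
      simp [hΦ, Complex.real_smul]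
    have hcont : Continuous ((φ k).normed volume ⋆[ContinuousLinearMap.lsmul ℝ ℝ] G) :=
      HasCompactSupport.continuous_convolution_left _ ((φ k).hasCompactSupport_normed)
        ((φ k).continuous_normed) hG.locallyIntegrable
    have hint : Integrable ((φ k).normed volume ⋆[ContinuousLinearMap.lsmul ℝ ℝ] G) :=
      ((φ k).integrable_normed).integrable_convolution _ hG
    have hfour : ∀ ξ, 𝓕 ((φ k).normed volume ⋆[ContinuousLinearMap.lsmul ℝ ℝ] G) ξ = 0 := by
      intro ξ
      rw [hconv_eq, fourier_conv Φ G hΦint hG ξ, h ξ, mul_zero]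
    have hfour_eq : 𝓕 ((φ k).normed volume ⋆[ContinuousLinearMap.lsmul ℝ ℝ] G) = 0 :=
      funext hfour
    have hinv := hcont.fourierInv_fourier_eq hint (by rw [hfour_eq]; exact integrable_zero _ _ _)
    rw [hfour_eq] at hinv
    rw [← hinv]
    funext w
    rw [Real.fourierInv_eq]
    simp
  have hae := ContDiffBump.ae_convolution_tendsto_right_of_locallyIntegrable
    (μ := (volume : Measure E)) (g := G) hφout hφK hG.locallyIntegrable
  filter_upwards [hae] with x hx
  have : ∀ k, ((φ k).normed volume ⋆[ContinuousLinearMap.lsmul ℝ ℝ] G) x = 0 := by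
    intro k; rw [hu0 k]; rfl
  have h2 : Tendsto (fun _ : ℕ => (0 : ℂ)) atTop (𝓝 (G x)) := by
    refine hx.congr fun k => ?_
    rw [this k]
  simpa using tendsto_nhds_unique h2 tendsto_const_nhds

end ConvAux

open ConvAux in
theorem conv_no_zero_divisors {n : ℕ} (f g : (Fin n → ℝ) → ℝ)
    (hf : MemLp f 2 volume) (hg : MemLp g 2 volume)
    (hfc : IsCompact (essSupp f)) (hgc : IsCompact (essSupp g))
    (h0 : conv f g =ᵐ[volume] 0) :
    f =ᵐ[volume] 0 ∨ g =ᵐ[volume] 0 := by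
  classical
  -- choose a common radius for the essential supports
  obtain ⟨R, hR⟩ := (hfc.isBounded.union hgc.isBounded).subset_closedBall 0
  have hRf : essSupp f ⊆ Metric.closedBall 0 R := (subset_union_left).trans hR
  have hRg : essSupp g ⊆ Metric.closedBall 0 R := (subset_union_right).trans hR
  -- truncated versions
  set f' : (Fin n → ℝ) → ℝ := (Metric.closedBall (0 : Fin n → ℝ) R).indicator f with hf'def
  set g' : (Fin n → ℝ) → ℝ := (Metric.closedBall (0 : Fin n → ℝ) R).indicator g with hg'def
  have hff' : f =ᵐ[volume] f' := by
    filter_upwards [ae_eq_zero_outside_essSupp f] with x hx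
    by_cases hxb : x ∈ Metric.closedBall (0 : Fin n → ℝ) R
    · rw [hf'def, Set.indicator_of_mem hxb]
    · rw [hf'def, Set.indicator_of_notMem hxb]
      exact hx fun hmem => hxb (hRf hmem)
  have hgg' : g =ᵐ[volume] g' := by
    filter_upwards [ae_eq_zero_outside_essSupp g] with x hx
    by_cases hxb : x ∈ Metric.closedBall (0 : Fin n → ℝ) R
    · rw [hg'def, Set.indicator_of_mem hxb]
    · rw [hg'def, Set.indicator_of_notMem hxb]
      exact hx fun hmem => hxb (hRg hmem)
  -- integrability of the truncations
  have hf'int : Integrable f' := by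
    refine memLp_one_iff_integrable.mp ?_
    refine (hf.ae_eq hff').mono_exponent_of_measure_support_ne_top
      (s := Metric.closedBall 0 R) (fun x hx => Set.indicator_of_notMem hx f)
      (IsCompact.measure_lt_top (isCompact_closedBall 0 R)).ne (by norm_num)
  have hg'int : Integrable g' := by
    refine memLp_one_iff_integrable.mp ?_
    refine (hg.ae_eq hgg').mono_exponent_of_measure_support_ne_top
      (s := Metric.closedBall 0 R) (fun x hx => Set.indicator_of_notMem hx g)
      (IsCompact.measure_lt_top (isCompact_closedBall 0 R)).ne (by norm_num)
  -- move to Euclidean space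
  set me := (MeasurableEquiv.toLp 2 (Fin n → ℝ)).symm with hme
  have vp : MeasurePreserving me volume volume :=
    EuclideanSpace.volume_preserving_symm_measurableEquiv_toLp (Fin n)
  have vps : MeasurePreserving me.symm volume volume := vp.symm me
  set F : EuclideanSpace ℝ (Fin n) → ℂ := fun x => (f' (me x) : ℂ) with hFdef
  set G : EuclideanSpace ℝ (Fin n) → ℂ := fun x => (g' (me x) : ℂ) with hGdef
  have hFint : Integrable F :=
    (vp.integrable_comp (hf'int.ofReal (𝕜 := ℂ)).aestronglyMeasurable).mpr
      (hf'int.ofReal (𝕜 := ℂ))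
  have hGint : Integrable G :=
    (vp.integrable_comp (hg'int.ofReal (𝕜 := ℂ)).aestronglyMeasurable).mpr
      (hg'int.ofReal (𝕜 := ℂ))
  -- support bound in the Euclidean norm
  obtain ⟨R', hR'⟩ := (((EuclideanSpace.equiv (Fin n) ℝ).toHomeomorph.isCompact_preimage).mpr
    (isCompact_closedBall (0 : Fin n → ℝ) R)).isBounded.subset_closedBall 0
  have hGsupp : ∀ x : EuclideanSpace ℝ (Fin n), G x ≠ 0 → ‖x‖ ≤ R' := by
    intro x hx
    have h1 : g' (me x) ≠ 0 := by
      intro h; rw [hGdef] at hx; simp [h] at hx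
    have h2 : me x ∈ Metric.closedBall (0 : Fin n → ℝ) R := by
      by_contra h3
      exact h1 (Set.indicator_of_notMem h3 g)
    have h4 : x ∈ (EuclideanSpace.equiv (Fin n) ℝ).toHomeomorph ⁻¹'
        Metric.closedBall (0 : Fin n → ℝ) R := h2
    simpa using hR' h4
  -- the convolution over the pi-type, rewritten
  have hconv_pt : ∀ s : Fin n → ℝ, conv f g s = ∫ t, f' t * g' (s - t) := by
    intro s
    have e1 : conv f g s = ∫ t, f' (s - t) * g' t := by
      rw [conv]
      refine integral_congr_ae ?_
      have hq : Measure.QuasiMeasurePreserving (fun t => s - t)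
          (volume : Measure (Fin n → ℝ)) volume :=
        (MeasureTheory.Measure.measurePreserving_sub_left volume s).quasiMeasurePreserving
      filter_upwards [hq.ae_eq hff', hgg'] with t h1 h2
      simp only [Function.comp] at h1
      rw [h1, h2]
    have e2 : ∫ t, f' (s - t) * g' t = ∫ t, f' t * g' (s - t) := by
      rw [← integral_sub_left_eq_self (fun t => f' (s - t) * g' t) volume s]
      refine integral_congr_ae (Filter.Eventually.of_forall fun t => ?_)
      simp
    rw [e1, e2]
  -- the convolution over Euclidean space vanishes a.e.
  have hFG0 : ∀ᵐ x ∂(volume : Measure (EuclideanSpace ℝ (Fin n))),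
      (F ⋆[ContinuousLinearMap.mul ℝ ℂ] G) x = 0 := by
    have hae : ∀ᵐ s ∂(volume : Measure (Fin n → ℝ)), ∫ t, f' t * g' (s - t) = 0 := by
      filter_upwards [h0] with s hs
      rw [← hconv_pt s]
      exact hs
    have hae2 : ∀ᵐ x ∂(volume : Measure (EuclideanSpace ℝ (Fin n))),
        ∫ t, f' t * g' (me x - t) = 0 := by
      refine ae_of_ae_map (p := fun s : Fin n → ℝ => ∫ t, f' t * g' (s - t) = 0)
        me.measurable.aemeasurable ?_
      rwa [vp.map_eq]
    filter_upwards [hae2] with x hx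
    have e3 : (F ⋆[ContinuousLinearMap.mul ℝ ℂ] G) x
        = ((∫ t, f' t * g' (me x - t) : ℝ) : ℂ) := by
      rw [convolution_def]
      have e4 : ∀ t : EuclideanSpace ℝ (Fin n),
          (ContinuousLinearMap.mul ℝ ℂ) (F t) (G (x - t))
            = (fun u : Fin n → ℝ => ((f' u * g' (me x - u) : ℝ) : ℂ)) (me t) := by
        intro t
        simp only [ContinuousLinearMap.mul_apply', hFdef, hGdef]
        push_cast
        rfl
      rw [integral_congr_ae (Filter.Eventually.of_forall e4)]
      rw [vp.integral_comp me.measurableEmbedding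
        (fun u : Fin n → ℝ => ((f' u * g' (me x - u) : ℝ) : ℂ))]
      exact integral_ofReal
    rw [e3, hx]
    norm_num
  -- Fourier transforms multiply to zero
  have hmul0 : ∀ ξ, 𝓕 F ξ * 𝓕 G ξ = 0 := by
    intro ξ
    rw [← fourier_conv F G hFint hGint ξ, fourier_eq_mul]
    calc ∫ x, (𝐞 (-⟪x, ξ⟫) : ℂ) * (F ⋆[ContinuousLinearMap.mul ℝ ℂ] G) x
        = ∫ x, (0 : ℂ) := by
          refine integral_congr_ae ?_
          filter_upwards [hFG0] with x hx
          rw [hx, mul_zero]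
      _ = 0 := integral_zero _ _
  -- transfer a.e. vanishing back to the pi-type
  have transfer : ∀ (z : (Fin n → ℝ) → ℝ),
      ((fun x => (z (me x) : ℂ)) =ᵐ[(volume : Measure (EuclideanSpace ℝ (Fin n)))] 0) →
      z =ᵐ[volume] 0 := by
    intro z hz
    have : ∀ᵐ s ∂(volume : Measure (Fin n → ℝ)), (z (me (me.symm s)) : ℂ) = 0 := by
      refine ae_of_ae_map (p := fun x : EuclideanSpace ℝ (Fin n) => (z (me x) : ℂ) = 0)
        me.symm.measurable.aemeasurable ?_
      rw [vps.map_eq]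
      filter_upwards [hz] with x hx
      exact hx
    filter_upwards [this] with s hs
    rw [me.apply_symm_apply] at hs
    exact_mod_cast hs
  by_cases hF0 : ∀ ξ, 𝓕 F ξ = 0
  · -- f vanishes
    left
    have hF := fourier_inj F hFint hF0
    exact hff'.trans (transfer f' hF)
  · -- g vanishes
    right
    push_neg at hF0
    obtain ⟨ξ₀, hξ₀⟩ := hF0
    have hFcont : Continuous (𝓕 F) := by
      apply VectorFourier.fourierIntegral_continuous Real.continuous_fourierChar
        (by exact continuous_inner) hFint
    have hG0 : ∀ ξ, 𝓕 G ξ = 0 := by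
      intro ξ₁
      have hU : IsOpen {w : EuclideanSpace ℝ (Fin n) | 𝓕 F w ≠ 0} :=
        isOpen_compl_iff.mpr (isClosed_singleton.preimage hFcont)
      have han := fourier_analytic_line G hGint hGsupp ξ₀ (ξ₁ - ξ₀)
      have hev : (fun t : ℝ => 𝓕 G (ξ₀ + t • (ξ₁ - ξ₀))) =ᶠ[𝓝 (0 : ℝ)] 0 := by
        have hcont : Continuous fun t : ℝ => ξ₀ + t • (ξ₁ - ξ₀) :=
          continuous_const.add (continuous_id.smul continuous_const)
        have hmem : ∀ᶠ t in 𝓝 (0 : ℝ), (ξ₀ + t • (ξ₁ - ξ₀))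
            ∈ {w : EuclideanSpace ℝ (Fin n) | 𝓕 F w ≠ 0} := by
          refine hcont.continuousAt.eventually_mem ?_
          simpa using hU.mem_nhds (by simpa using hξ₀)
        filter_upwards [hmem] with t ht
        have := hmul0 (ξ₀ + t • (ξ₁ - ξ₀))
        rcases mul_eq_zero.mp this with h | h
        · exact absurd h ht
        · exact h
      have := han.eqOn_zero_of_preconnected_of_eventuallyEq_zero
        isPreconnected_univ (Set.mem_univ (0 : ℝ)) hev (Set.mem_univ (1 : ℝ))
      simpa using this
    have hG := fourier_inj G hGint hG0
    exact hgg'.trans (transfer g' hG)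
end

section
/- For all s ∈ [0,1] and k ∈ ℕ, the bound 0 ≤ ∫₀ˢ sin(k² t²) dt ≤ √π / k holds; consequently ∫₀ˢ sin(k²t²) dt → 0 uniformly in s as k → ∞. -/
open MeasureTheory Set Filter intervalIntegral Real

lemma mono_aux {f f' : ℝ → ℝ} (hf : ∀ x, HasDerivAt f (f' x) x) (hc : Continuous f')
    (hd : ∀ x, 0 ≤ x → 0 ≤ f' x) {x : ℝ} (hx : 0 ≤ x) : f 0 ≤ f x := by
  have h1 := intervalIntegral.integral_eq_sub_of_hasDerivAt
    (fun t _ => hf t) (hc.intervalIntegrable 0 x)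
  have h2 : 0 ≤ ∫ t in (0:ℝ)..x, f' t :=
    intervalIntegral.integral_nonneg hx (fun u hu => hd u hu.1)
  linarith

lemma s2 {x : ℝ} (hx : 0 ≤ x) : x - x^3/6 ≤ Real.sin x := by
  have := mono_aux (f := fun x => Real.sin x - x + x^3/6)
    (f' := fun x => Real.cos x - 1 + x^2/2)
    (fun y => by
      have h := ((Real.hasDerivAt_sin y).sub (hasDerivAt_id y)).add
        ((hasDerivAt_pow 3 y).div_const 6)
      refine h.congr_deriv ?_; ring) (by continuity)
    (fun y _ => by have := Real.one_sub_sq_div_two_le_cos (x := y); linarith) hx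
  simp at this; linarith

lemma c2 {x : ℝ} (hx : 0 ≤ x) : Real.cos x ≤ 1 - x^2/2 + x^4/24 := by
  have := mono_aux (f := fun x => 1 - x^2/2 + x^4/24 - Real.cos x)
    (f' := fun x => -x + x^3/6 + Real.sin x)
    (fun y => by
      have h := ((((hasDerivAt_pow 2 y).div_const 2).const_sub 1).add
        ((hasDerivAt_pow 4 y).div_const 24)).sub (Real.hasDerivAt_cos y)
      refine h.congr_deriv ?_; push_cast; ring) (by continuity)
    (fun y hy => by have := s2 hy; linarith) hx
  simp at this; linarith

lemma s3 {x : ℝ} (hx : 0 ≤ x) : Real.sin x ≤ x - x^3/6 + x^5/120 := by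
  have := mono_aux (f := fun x => x - x^3/6 + x^5/120 - Real.sin x)
    (f' := fun x => 1 - x^2/2 + x^4/24 - Real.cos x)
    (fun y => by
      have h := (((hasDerivAt_id y).sub ((hasDerivAt_pow 3 y).div_const 6)).add
        ((hasDerivAt_pow 5 y).div_const 120)).sub (Real.hasDerivAt_sin y)
      refine h.congr_deriv ?_; push_cast; ring) (by continuity)
    (fun y hy => by have := c2 hy; linarith) hx
  simp at this; linarith

lemma c3 {x : ℝ} (hx : 0 ≤ x) : 1 - x^2/2 + x^4/24 - x^6/720 ≤ Real.cos x := by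
  have := mono_aux (f := fun x => Real.cos x - (1 - x^2/2 + x^4/24 - x^6/720))
    (f' := fun x => x - x^3/6 + x^5/120 - Real.sin x)
    (fun y => by
      have h := (Real.hasDerivAt_cos y).sub (((((hasDerivAt_pow 2 y).div_const 2).const_sub 1).add
        ((hasDerivAt_pow 4 y).div_const 24)).sub ((hasDerivAt_pow 6 y).div_const 720))
      refine h.congr_deriv ?_; push_cast; ring) (by continuity)
    (fun y hy => by have := s3 hy; linarith) hx
  simp at this; linarith

lemma s4 {x : ℝ} (hx : 0 ≤ x) : x - x^3/6 + x^5/120 - x^7/5040 ≤ Real.sin x := by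
  have := mono_aux (f := fun x => Real.sin x - (x - x^3/6 + x^5/120 - x^7/5040))
    (f' := fun x => Real.cos x - (1 - x^2/2 + x^4/24 - x^6/720))
    (fun y => by
      have h := (Real.hasDerivAt_sin y).sub ((((hasDerivAt_id y).sub
        ((hasDerivAt_pow 3 y).div_const 6)).add ((hasDerivAt_pow 5 y).div_const 120)).sub
        ((hasDerivAt_pow 7 y).div_const 5040))
      refine h.congr_deriv ?_; push_cast; ring) (by continuity)
    (fun y hy => by have := c3 hy; linarith) hx
  simp at this; linarith

-- numeric lemmas
lemma numA : 1 ≤ Real.pi^2/3 - Real.pi^4/42 + Real.pi^6/1320 - Real.pi^8/75600 := by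
  have l : (3.141592:ℝ) ≤ π := Real.pi_gt_d6.le
  have h : π ≤ (3.141593:ℝ) := Real.pi_lt_d6.le
  have h0 : (0:ℝ) ≤ π := Real.pi_pos.le
  have p2 : (3.141592:ℝ)^2 ≤ π^2 := by gcongr
  have p4 : π^4 ≤ (3.141593:ℝ)^4 := by gcongr
  have p6 : (3.141592:ℝ)^6 ≤ π^6 := by gcongr
  have p8 : π^8 ≤ (3.141593:ℝ)^8 := by gcongr
  have : (1:ℝ) ≤ (3.141592:ℝ)^2/3 - (3.141593:ℝ)^4/42 + (3.141592:ℝ)^6/1320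
      - (3.141593:ℝ)^8/75600 := by norm_num
  linarith

lemma numB : Real.pi^2/3 - Real.pi^4/42 + Real.pi^6/1320 + 1 ≤ Real.pi := by
  have l : (3.141592:ℝ) ≤ π := Real.pi_gt_d6.le
  have h : π ≤ (3.141593:ℝ) := Real.pi_lt_d6.le
  have h0 : (0:ℝ) ≤ π := Real.pi_pos.le
  have p2 : π^2 ≤ (3.141593:ℝ)^2 := by gcongr
  have p4 : (3.141592:ℝ)^4 ≤ π^4 := by gcongr
  have p6 : π^6 ≤ (3.141593:ℝ)^6 := by gcongr
  have : (3.141593:ℝ)^2/3 - (3.141592:ℝ)^4/42 + (3.141593:ℝ)^6/1320 + 1 ≤ 3.141592 := by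
    norm_num
  linarith

lemma contS : Continuous (fun u : ℝ => Real.sin (u^2)) :=
  Real.continuous_sin.comp (continuous_pow 2)

-- lower poly integral: ∫_0^c (u^2 - u^6/6 + u^10/120 - u^14/5040) = c^3/3 - c^7/42 + c^11/1320 - c^15/75600
lemma polyL (c : ℝ) :
    (∫ u in (0:ℝ)..c, (u^2 - u^6/6 + u^10/120 - u^14/5040))
      = c^3/3 - c^7/42 + c^11/1320 - c^15/75600 := by
  have h : ∀ u : ℝ, HasDerivAt (fun u : ℝ => u^3/3 - u^7/42 + u^11/1320 - u^15/75600)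
      (u^2 - u^6/6 + u^10/120 - u^14/5040) u := by
    intro u
    have h := ((((hasDerivAt_pow 3 u).div_const 3).sub ((hasDerivAt_pow 7 u).div_const 42)).add
      ((hasDerivAt_pow 11 u).div_const 1320)).sub ((hasDerivAt_pow 15 u).div_const 75600)
    refine h.congr_deriv ?_; push_cast; ring
  have := intervalIntegral.integral_eq_sub_of_hasDerivAt (fun u _ => h u)
    ((by continuity : Continuous fun u : ℝ => u^2 - u^6/6 + u^10/120 - u^14/5040).intervalIntegrable 0 c)
  simpa using this

lemma polyU (c : ℝ) :
    (∫ u in (0:ℝ)..c, (u^2 - u^6/6 + u^10/120)) = c^3/3 - c^7/42 + c^11/1320 := by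
  have h : ∀ u : ℝ, HasDerivAt (fun u : ℝ => u^3/3 - u^7/42 + u^11/1320)
      (u^2 - u^6/6 + u^10/120) u := by
    intro u
    have h := (((hasDerivAt_pow 3 u).div_const 3).sub ((hasDerivAt_pow 7 u).div_const 42)).add
      ((hasDerivAt_pow 11 u).div_const 1320)
    refine h.congr_deriv ?_; push_cast; ring
  have := intervalIntegral.integral_eq_sub_of_hasDerivAt (fun u _ => h u)
    ((by continuity : Continuous fun u : ℝ => u^2 - u^6/6 + u^10/120).intervalIntegrable 0 c)
  simpa using this


lemma S_bounds {x : ℝ} (hx : 0 ≤ x) :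
    0 ≤ (∫ u in (0:ℝ)..x, Real.sin (u^2)) ∧
      (∫ u in (0:ℝ)..x, Real.sin (u^2)) ≤ Real.sqrt Real.pi := by
  have hπ : (0:ℝ) < π := Real.pi_pos
  set c := Real.sqrt π with hcdef
  have hc2 : c^2 = π := Real.sq_sqrt hπ.le
  have hc0 : 0 < c := Real.sqrt_pos.mpr hπ
  -- small case bounds
  have key : ∀ y : ℝ, 0 ≤ y → y ≤ c →
      0 ≤ (∫ u in (0:ℝ)..y, Real.sin (u^2)) ∧ (∫ u in (0:ℝ)..y, Real.sin (u^2)) ≤ y := by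
    intro y hy0 hyc
    constructor
    · apply intervalIntegral.integral_nonneg hy0
      intro u hu
      apply Real.sin_nonneg_of_nonneg_of_le_pi (sq_nonneg u)
      calc u^2 ≤ c^2 := by gcongr; exacts [hu.1, hu.2.trans hyc]
        _ = π := hc2
    · calc (∫ u in (0:ℝ)..y, Real.sin (u^2)) ≤ ∫ _u in (0:ℝ)..y, (1:ℝ) :=
          intervalIntegral.integral_mono_on hy0 (contS.intervalIntegrable 0 y)
            (intervalIntegrable_const) (fun u _ => Real.sin_le_one _)
        _ = y := by simp
  rcases le_or_gt x c with hxc | hcx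
  · obtain ⟨h1, h2⟩ := key x hx hxc
    exact ⟨h1, h2.trans hxc⟩
  · -- bounds on S c
    have hSc_low : c^3/3 - c^7/42 + c^11/1320 - c^15/75600
        ≤ (∫ u in (0:ℝ)..c, Real.sin (u^2)) := by
      rw [← polyL c]
      apply intervalIntegral.integral_mono_on hc0.le
        ((by continuity : Continuous fun u : ℝ => u^2 - u^6/6 + u^10/120 - u^14/5040).intervalIntegrable 0 c)
        (contS.intervalIntegrable 0 c)
      intro u _
      calc u^2 - u^6/6 + u^10/120 - u^14/5040
          = u^2 - (u^2)^3/6 + (u^2)^5/120 - (u^2)^7/5040 := by ring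
        _ ≤ Real.sin (u^2) := s4 (sq_nonneg u)
    have hSc_up : (∫ u in (0:ℝ)..c, Real.sin (u^2)) ≤ c^3/3 - c^7/42 + c^11/1320 := by
      rw [← polyU c]
      apply intervalIntegral.integral_mono_on hc0.le (contS.intervalIntegrable 0 c)
        ((by continuity : Continuous fun u : ℝ => u^2 - u^6/6 + u^10/120).intervalIntegrable 0 c)
      intro u _
      calc Real.sin (u^2) ≤ u^2 - (u^2)^3/6 + (u^2)^5/120 := s3 (sq_nonneg u)
        _ = u^2 - u^6/6 + u^10/120 := by ring
    have e3 : c^3 = π * c := by rw [← hc2]; ring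
    have e7 : c^7 = π^3 * c := by rw [← hc2]; ring
    have e11 : c^11 = π^5 * c := by rw [← hc2]; ring
    have e15 : c^15 = π^7 * c := by rw [← hc2]; ring
    -- numeric consequences
    have hx0 : 0 < x := hc0.trans hcx
    have hScl : 1/c ≤ (∫ u in (0:ℝ)..c, Real.sin (u^2)) := by
      rw [div_le_iff₀ hc0]
      have hLe : (c^3/3 - c^7/42 + c^11/1320 - c^15/75600) * c
          = (c^2)^2/3 - (c^2)^4/42 + (c^2)^6/1320 - (c^2)^8/75600 := by ring
      rw [hc2] at hLe
      have hm := mul_le_mul_of_nonneg_right hSc_low hc0.le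
      have h := numA
      linarith
    have hScu : (∫ u in (0:ℝ)..c, Real.sin (u^2)) + 1/c ≤ c := by
      have hUe : (c^3/3 - c^7/42 + c^11/1320) * c
          = (c^2)^2/3 - (c^2)^4/42 + (c^2)^6/1320 := by ring
      rw [hc2] at hUe
      have hm := mul_le_mul_of_nonneg_right hSc_up hc0.le
      have h := numB
      have hcc : c * c = π := by rw [← hc2]; ring
      have hinv : (1/c) * c = 1 := by field_simp
      have hexp : ((∫ u in (0:ℝ)..c, Real.sin (u^2)) + 1/c) * c
          = (∫ u in (0:ℝ)..c, Real.sin (u^2)) * c + (1/c) * c := by ring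
      have : ((∫ u in (0:ℝ)..c, Real.sin (u^2)) + 1/c) * c ≤ c * c := by linarith
      exact le_of_mul_le_mul_right this hc0
    -- tail bound via integration by parts
    have hsub : ∀ u : ℝ, u ∈ Set.uIcc c x → 0 < u := by
      intro u hu
      rw [Set.uIcc_of_le hcx.le] at hu
      exact lt_of_lt_of_le hc0 hu.1
    have hG : ∀ u ∈ Set.uIcc c x, HasDerivAt (fun u : ℝ => -Real.cos (u^2) / (2*u))
        (Real.sin (u^2) + Real.cos (u^2)/(2*u^2)) u := by
      intro u hu
      have hu0 := hsub u hu
      have h1 : HasDerivAt (fun u : ℝ => Real.cos (u^2)) (-Real.sin (u^2) * (2*u^1)) u :=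
        by have := (Real.hasDerivAt_cos (u^2)).comp u ((hasDerivAt_pow 2 u).congr_deriv (by norm_num) : HasDerivAt (fun x : ℝ => x^2) (2*u^1) u); exact this
      have h2 : HasDerivAt (fun u : ℝ => 2*u) 2 u := by
        simpa using (hasDerivAt_id u).const_mul 2
      have := (h1.neg.div h2 (by positivity))
      refine this.congr_deriv ?_
      simp only [Pi.neg_apply]
      field_simp
      ring
    have int2 : IntervalIntegrable (fun u : ℝ => Real.cos (u^2)/(2*u^2)) volume c x := by
      apply ContinuousOn.intervalIntegrable
      apply ContinuousOn.div (Real.continuous_cos.comp (continuous_pow 2)).continuousOn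
        (continuous_const.mul (continuous_pow 2)).continuousOn
      intro u hu
      have := hsub u hu
      show (2:ℝ)*u^2 ≠ 0
      positivity
    have intI : IntervalIntegrable (fun u : ℝ => 1/(2*u^2)) volume c x := by
      apply ContinuousOn.intervalIntegrable
      apply ContinuousOn.div continuousOn_const
        (continuous_const.mul (continuous_pow 2)).continuousOn
      intro u hu
      have := hsub u hu
      show (2:ℝ)*u^2 ≠ 0
      positivity
    have intAll : IntervalIntegrable (fun u : ℝ => Real.sin (u^2) + Real.cos (u^2)/(2*u^2))
        volume c x := (contS.intervalIntegrable c x).add int2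
    have hFTC := intervalIntegral.integral_eq_sub_of_hasDerivAt hG intAll
    rw [intervalIntegral.integral_add (contS.intervalIntegrable c x) int2] at hFTC
    -- integral of 1/(2u^2)
    have hIeq : (∫ u in c..x, 1/(2*u^2)) = 1/(2*c) - 1/(2*x) := by
      have hF : ∀ u ∈ Set.uIcc c x, HasDerivAt (fun u : ℝ => -(1/(2*u))) (1/(2*u^2)) u := by
        intro u hu
        have hu0 := hsub u hu
        have h2 : HasDerivAt (fun u : ℝ => 2*u) 2 u := by
          simpa using (hasDerivAt_id u).const_mul 2
        have := ((hasDerivAt_const u (1:ℝ)).div h2 (by positivity)).neg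
        refine this.congr_deriv ?_
        ring
      have := intervalIntegral.integral_eq_sub_of_hasDerivAt hF intI
      rw [this]; ring
    -- bound H
    have hHu : (∫ u in c..x, Real.cos (u^2)/(2*u^2)) ≤ 1/(2*c) - 1/(2*x) := by
      rw [← hIeq]
      apply intervalIntegral.integral_mono_on hcx.le int2 intI
      intro u hu
      have hu0 : 0 < u := lt_of_lt_of_le hc0 hu.1
      gcongr
      exact Real.cos_le_one _
    have hHl : -(1/(2*c) - 1/(2*x)) ≤ (∫ u in c..x, Real.cos (u^2)/(2*u^2)) := by
      have hneg : (∫ u in c..x, -(1/(2*u^2))) = -(1/(2*c) - 1/(2*x)) := by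
        rw [intervalIntegral.integral_neg, hIeq]
      have hmono : (∫ u in c..x, -(1/(2*u^2))) ≤ ∫ u in c..x, Real.cos (u^2)/(2*u^2) := by
        apply intervalIntegral.integral_mono_on hcx.le intI.neg int2
        intro u hu
        have hu0 : 0 < u := lt_of_lt_of_le hc0 hu.1
        simp only [Pi.neg_apply]
        rw [show -(1/(2*u^2)) = (-1)/(2*u^2) by ring]
        gcongr
        exact Real.neg_one_le_cos _
      linarith
    -- bound boundary terms
    have hGx : |(-Real.cos (x^2) / (2*x))| ≤ 1/(2*x) := by
      rw [abs_div, abs_neg, abs_of_pos (by positivity : (0:ℝ) < 2*x)]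
      gcongr
      exact Real.abs_cos_le_one _
    have hGc : |(-Real.cos (c^2) / (2*c))| ≤ 1/(2*c) := by
      rw [abs_div, abs_neg, abs_of_pos (by positivity : (0:ℝ) < 2*c)]
      gcongr
      exact Real.abs_cos_le_one _
    rw [abs_le] at hGx hGc
    -- tail bounds
    have hT : -(1/c) ≤ (∫ u in c..x, Real.sin (u^2)) ∧
        (∫ u in c..x, Real.sin (u^2)) ≤ 1/c := by
      have hc' : c ≠ 0 := hc0.ne'
      have hx' : x ≠ 0 := hx0.ne'
      have hhc : 1/(2*c) + 1/(2*c) = 1/c := by field_simp; norm_num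
      have hhx : 1/(2*x) + 1/(2*x) = 1/x := by field_simp; norm_num
      constructor <;> linarith [hFTC, hHu, hHl, hGx.1, hGx.2, hGc.1, hGc.2]
    have hsplit : (∫ u in (0:ℝ)..c, Real.sin (u^2)) + (∫ u in c..x, Real.sin (u^2))
        = ∫ u in (0:ℝ)..x, Real.sin (u^2) :=
      intervalIntegral.integral_add_adjacent_intervals (contS.intervalIntegrable 0 c)
        (contS.intervalIntegrable c x)
    constructor
    · linarith [hT.1, hScl]
    · linarith [hT.2, hScu]


theorem fresnel_integral_bound :
    (∀ s ∈ Set.Icc (0 : ℝ) 1, ∀ k : ℕ, 1 ≤ k →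
      0 ≤ ∫ t in (0 : ℝ)..s, Real.sin ((k : ℝ)^2 * t^2) ∧
      (∫ t in (0 : ℝ)..s, Real.sin ((k : ℝ)^2 * t^2)) ≤ Real.sqrt Real.pi / (k : ℝ)) ∧
    TendstoUniformlyOn (fun (k : ℕ) (s : ℝ) => ∫ t in (0 : ℝ)..s, Real.sin ((k : ℝ)^2 * t^2))
      0 atTop (Set.Icc (0 : ℝ) 1) := by
  have main : ∀ s ∈ Set.Icc (0 : ℝ) 1, ∀ k : ℕ, 1 ≤ k →
      0 ≤ ∫ t in (0 : ℝ)..s, Real.sin ((k : ℝ)^2 * t^2) ∧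
      (∫ t in (0 : ℝ)..s, Real.sin ((k : ℝ)^2 * t^2)) ≤ Real.sqrt Real.pi / (k : ℝ) := by
    intro s hs k hk
    have hk0 : (0:ℝ) < (k:ℝ) := by exact_mod_cast hk
    have hrw : (∫ t in (0:ℝ)..s, Real.sin ((k : ℝ)^2 * t^2))
        = (k:ℝ)⁻¹ * ∫ u in (0:ℝ)..((k:ℝ)*s), Real.sin (u^2) := by
      have h1 : ∀ t : ℝ, Real.sin ((k : ℝ)^2 * t^2) = Real.sin (((k:ℝ)*t)^2) := by
        intro t; ring_nf
      simp_rw [h1]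
      have := intervalIntegral.integral_comp_mul_left (a := (0:ℝ)) (b := s)
        (fun u : ℝ => Real.sin (u^2)) hk0.ne'
      simpa using this
    have hks : 0 ≤ (k:ℝ) * s := mul_nonneg hk0.le hs.1
    obtain ⟨hl, hu⟩ := S_bounds hks
    rw [hrw]
    constructor
    · positivity
    · rw [div_eq_inv_mul]
      exact mul_le_mul_of_nonneg_left hu (by positivity)
  refine ⟨main, ?_⟩
  rw [Metric.tendstoUniformlyOn_iff]
  intro ε hε
  rcases exists_nat_gt (Real.sqrt Real.pi / ε) with ⟨N, hN⟩
  filter_upwards [eventually_ge_atTop (max N 1)] with k hk s hs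
  have hk1 : 1 ≤ k := le_trans (le_max_right N 1) hk
  have hkN : (N:ℝ) ≤ (k:ℝ) := by exact_mod_cast le_trans (le_max_left N 1) hk
  have hk0 : (0:ℝ) < (k:ℝ) := by exact_mod_cast hk1
  obtain ⟨h1, h2⟩ := main s hs k hk1
  have hd : dist ((0 : ℕ → ℝ → ℝ) k s) (∫ t in (0:ℝ)..s, Real.sin ((k : ℝ)^2 * t^2))
      = |∫ t in (0:ℝ)..s, Real.sin ((k : ℝ)^2 * t^2)| := by
    simp [Real.dist_eq]
  have hlt : Real.sqrt Real.pi / (k:ℝ) < ε := by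
    rw [div_lt_iff₀ hk0]
    have h3 : Real.sqrt Real.pi < (N:ℝ) * ε := (div_lt_iff₀ hε).mp hN
    nlinarith [Real.sqrt_nonneg Real.pi]
  calc dist ((0:ℝ)) (∫ t in (0:ℝ)..s, Real.sin ((k : ℝ)^2 * t^2))
      = |∫ t in (0:ℝ)..s, Real.sin ((k : ℝ)^2 * t^2)| := by simp [Real.dist_eq]
    _ = ∫ t in (0:ℝ)..s, Real.sin ((k : ℝ)^2 * t^2) := abs_of_nonneg h1
    _ ≤ Real.sqrt Real.pi / (k:ℝ) := h2
    _ < ε := hlt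
end

section
/- The autoconvolutions of h_k(t) = √2·r·sin(k²t²)·𝟙_{[0,1]}(t) converge to zero in L²([0,2]): there is a constant C > 0 such that |[h_k*h_k](ξ)| ≤ C/k for all ξ ∈ [0,2] and all k ∈ ℕ, hence ‖h_k*h_k‖_{L²([0,2])} → 0 as k → ∞. -/
open MeasureTheory Set Filter Pointwise

/-- Convolution of two real-valued functions on ℝ. -/
noncomputable def conv1 (f g : ℝ → ℝ) : ℝ → ℝ :=
  fun s => ∫ t, f (s - t) * g t


lemma integral_cos_linear (β γ a b : ℝ) (hγ : γ ≠ 0) :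
    |∫ t in a..b, Real.cos (β + γ * t)| ≤ 2 / |γ| := by
  have key : ∫ t in a..b, Real.cos (β + γ * t)
      = Real.sin (β + γ * b) / γ - Real.sin (β + γ * a) / γ := by
    apply intervalIntegral.integral_eq_sub_of_hasDerivAt
      (f := fun t => Real.sin (β + γ * t) / γ)
    · intro x _
      have h1 : HasDerivAt (fun t : ℝ => β + γ * t) γ x := by
        simpa using ((hasDerivAt_id x).const_mul γ).const_add β
      have h2 := (h1.sin).div_const γ
      refine h2.congr_deriv ?_
      field_simp
    · exact (Real.continuous_cos.comp (by continuity)).intervalIntegrable a b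
  rw [key, div_sub_div_same, abs_div]
  gcongr
  calc |Real.sin (β + γ * b) - Real.sin (β + γ * a)| ≤ |Real.sin (β + γ * b)| + |Real.sin (β + γ * a)| := abs_sub _ _
    _ ≤ 1 + 1 := add_le_add (Real.abs_sin_le_one _) (Real.abs_sin_le_one _)
    _ = 2 := by norm_num

lemma fresnel_nonneg (α β : ℝ) (hα : 0 < α) (a b : ℝ) (ha : 0 ≤ a) (hab : a ≤ b) :
    |∫ u in a..b, Real.cos (α * u ^ 2 + β)| ≤ 3 / Real.sqrt α := by
  have hsα : 0 < Real.sqrt α := Real.sqrt_pos.mpr hα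
  set δ : ℝ := (Real.sqrt α)⁻¹ with hδ
  have hδpos : 0 < δ := inv_pos.mpr hsα
  set c : ℝ := min b (max a δ) with hc
  have hac : a ≤ c := le_min hab (le_max_left _ _)
  have hcb : c ≤ b := min_le_left _ _
  have hcont : Continuous fun u : ℝ => Real.cos (α * u ^ 2 + β) := by continuity
  have hint : ∀ x y : ℝ, IntervalIntegrable (fun u => Real.cos (α * u ^ 2 + β)) volume x y :=
    fun x y => hcont.intervalIntegrable x y
  have hsplit : ∫ u in a..b, Real.cos (α * u ^ 2 + β)
      = (∫ u in a..c, Real.cos (α * u ^ 2 + β)) + ∫ u in c..b, Real.cos (α * u ^ 2 + β) :=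
    (intervalIntegral.integral_add_adjacent_intervals (hint a c) (hint c b)).symm
  -- first piece
  have hca : c - a ≤ δ := by
    rcases le_or_gt a δ with h1 | h1
    · have : c ≤ δ := le_trans (min_le_right _ _) (by simp [max_le_iff, h1, le_refl]) 
      linarith
    · have : c ≤ a := le_trans (min_le_right _ _) (by simp [max_le_iff, le_refl, h1.le])
      linarith
  have h1bound : |∫ u in a..c, Real.cos (α * u ^ 2 + β)| ≤ δ := by
    have := intervalIntegral.norm_integral_le_of_norm_le_const (C := 1)
      (f := fun u => Real.cos (α * u ^ 2 + β)) (a := a) (b := c)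
      (fun x _ => by simpa using Real.abs_cos_le_one _)
    rw [Real.norm_eq_abs] at this
    calc |∫ u in a..c, Real.cos (α * u ^ 2 + β)| ≤ 1 * |c - a| := this
      _ = c - a := by rw [one_mul, abs_of_nonneg (by linarith)]
      _ ≤ δ := hca
  -- second piece
  have h2bound : |∫ u in c..b, Real.cos (α * u ^ 2 + β)| ≤ 3 / (2 * Real.sqrt α) := by
    rcases le_or_gt b (max a δ) with hb1 | hb1
    · have : c = b := min_eq_left hb1
      rw [this]
      simp
      positivity
    · have hcδ : δ ≤ c := by
        have : c = max a δ := min_eq_right hb1.le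
        rw [this]; exact le_max_right _ _
      have hcpos : 0 < c := lt_of_lt_of_le hδpos hcδ
      -- integration by parts
      have hne : ∀ x ∈ Set.uIcc c b, x ≠ 0 := by
        intro x hx
        rw [Set.uIcc_of_le hcb] at hx
        exact ne_of_gt (lt_of_lt_of_le hcpos hx.1)
      have hu : ∀ x ∈ Set.uIcc c b, HasDerivAt (fun t : ℝ => (2 * α)⁻¹ * t⁻¹)
          (-((2 * α)⁻¹ * (x ^ 2)⁻¹)) x := by
        intro x hx
        have := (hasDerivAt_inv (hne x hx)).const_mul (2 * α)⁻¹
        refine this.congr_deriv ?_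
        ring
      have hv : ∀ x ∈ Set.uIcc c b, HasDerivAt (fun t : ℝ => Real.sin (α * t ^ 2 + β))
          (Real.cos (α * x ^ 2 + β) * (2 * α * x)) x := by
        intro x _
        have h1 : HasDerivAt (fun t : ℝ => α * t ^ 2 + β) (2 * α * x) x := by
          have := ((hasDerivAt_pow 2 x).const_mul α).add_const β
          refine this.congr_deriv ?_
          ring
        exact h1.sin
      have huint : IntervalIntegrable (fun x : ℝ => -((2 * α)⁻¹ * (x ^ 2)⁻¹)) volume c b := by
        apply ContinuousOn.intervalIntegrable
        apply ContinuousOn.neg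
        apply ContinuousOn.mul continuousOn_const
        exact ContinuousOn.inv₀ (continuousOn_pow 2) (fun x hx => pow_ne_zero 2 (hne x hx))
      have hvint : IntervalIntegrable (fun x : ℝ => Real.cos (α * x ^ 2 + β) * (2 * α * x))
          volume c b := by
        apply Continuous.intervalIntegrable
        exact ((Real.continuous_cos.comp ((continuous_const.mul (continuous_pow 2)).add
          continuous_const)).mul (continuous_const.mul continuous_id))
      have heq : ∫ u in c..b, Real.cos (α * u ^ 2 + β)
          = ∫ x in c..b, ((2 * α)⁻¹ * x⁻¹) * (Real.cos (α * x ^ 2 + β) * (2 * α * x)) := by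
        apply intervalIntegral.integral_congr
        intro x hx
        have hx0 := hne x hx
        field_simp
      rw [heq, intervalIntegral.integral_mul_deriv_eq_deriv_mul hu hv huint hvint]
      have hcinv : c⁻¹ ≤ Real.sqrt α := by
        have h := inv_anti₀ hδpos hcδ
        rwa [hδ, inv_inv] at h
      have hbinvpos : (0:ℝ) < b := lt_of_lt_of_le hcpos hcb
      have hαsq : Real.sqrt α * Real.sqrt α = α := Real.mul_self_sqrt hα.le
      have hkey : (2 * α)⁻¹ * c⁻¹ ≤ 1 / (2 * Real.sqrt α) := by
        have h1 : (2 * α)⁻¹ * c⁻¹ ≤ (2 * α)⁻¹ * Real.sqrt α :=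
          mul_le_mul_of_nonneg_left hcinv (by positivity)
        have h2 : (2 * α)⁻¹ * Real.sqrt α = 1 / (2 * Real.sqrt α) := by
          rw [eq_div_iff (by positivity : (2:ℝ) * Real.sqrt α ≠ 0)]
          field_simp
          linear_combination hαsq
        linarith
      -- boundary terms
      have hb1 : |(2 * α)⁻¹ * b⁻¹ * Real.sin (α * b ^ 2 + β)| ≤ 1 / (2 * Real.sqrt α) := by
        rw [abs_mul, abs_mul]
        have h1 : |(2 * α)⁻¹| = (2 * α)⁻¹ := abs_of_pos (by positivity)
        have h2 : |b⁻¹| = b⁻¹ := abs_of_pos (by positivity)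
        rw [h1, h2]
        have hbinv : b⁻¹ ≤ c⁻¹ := inv_anti₀ hcpos hcb
        calc (2 * α)⁻¹ * b⁻¹ * |Real.sin (α * b ^ 2 + β)|
            ≤ (2 * α)⁻¹ * c⁻¹ * 1 :=
              mul_le_mul (mul_le_mul_of_nonneg_left hbinv (by positivity))
                (Real.abs_sin_le_one _) (abs_nonneg _) (by positivity)
          _ ≤ 1 / (2 * Real.sqrt α) := by rw [mul_one]; exact hkey
      have hc1 : |(2 * α)⁻¹ * c⁻¹ * Real.sin (α * c ^ 2 + β)| ≤ 1 / (2 * Real.sqrt α) := by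
        rw [abs_mul, abs_mul]
        have h1 : |(2 * α)⁻¹| = (2 * α)⁻¹ := abs_of_pos (by positivity)
        have h2 : |c⁻¹| = c⁻¹ := abs_of_pos (by positivity)
        rw [h1, h2]
        calc (2 * α)⁻¹ * c⁻¹ * |Real.sin (α * c ^ 2 + β)|
            ≤ (2 * α)⁻¹ * c⁻¹ * 1 :=
              mul_le_mul_of_nonneg_left (Real.abs_sin_le_one _) (by positivity)
          _ ≤ 1 / (2 * Real.sqrt α) := by rw [mul_one]; exact hkey
      -- the remaining integral
      have hintsq : ∫ x in c..b, (x ^ 2)⁻¹ = c⁻¹ - b⁻¹ := by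
        have := intervalIntegral.integral_eq_sub_of_hasDerivAt
          (f := fun x : ℝ => -x⁻¹) (f' := fun x : ℝ => (x ^ 2)⁻¹) (a := c) (b := b)
          (fun x hx => by
            have h := (hasDerivAt_inv (hne x hx)).neg
            simpa [sq, Pi.neg_def] using h)
          (by
            apply ContinuousOn.intervalIntegrable
            exact ContinuousOn.inv₀ (continuousOn_pow 2) (fun x hx => pow_ne_zero 2 (hne x hx)))
        rw [this]; ring
      have hrem : |∫ x in c..b, -((2 * α)⁻¹ * (x ^ 2)⁻¹) * Real.sin (α * x ^ 2 + β)|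
          ≤ 1 / (2 * Real.sqrt α) := by
        have hle := intervalIntegral.norm_integral_le_integral_norm
          (f := fun x => -((2 * α)⁻¹ * (x ^ 2)⁻¹) * Real.sin (α * x ^ 2 + β)) (μ := volume) hcb
        rw [Real.norm_eq_abs] at hle
        have hmono : ∫ x in c..b, ‖-((2 * α)⁻¹ * (x ^ 2)⁻¹) * Real.sin (α * x ^ 2 + β)‖
            ≤ ∫ x in c..b, (2 * α)⁻¹ * (x ^ 2)⁻¹ := by
          apply intervalIntegral.integral_mono_on hcb
          · apply ContinuousOn.intervalIntegrable
            apply ContinuousOn.norm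
            apply ContinuousOn.mul
            · apply ContinuousOn.neg
              exact (ContinuousOn.mul continuousOn_const
                (ContinuousOn.inv₀ (continuousOn_pow 2) (fun x hx => pow_ne_zero 2 (hne x hx))))
            · exact (Real.continuous_sin.comp ((continuous_const.mul (continuous_pow 2)).add continuous_const)).continuousOn
          · apply ContinuousOn.intervalIntegrable
            exact ContinuousOn.mul continuousOn_const
              (ContinuousOn.inv₀ (continuousOn_pow 2) (fun x hx => pow_ne_zero 2 (hne x hx)))
          · intro x hx
            have hx0 : x ≠ 0 := hne x (by rw [Set.uIcc_of_le hcb]; exact hx)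
            rw [Real.norm_eq_abs, abs_mul, abs_neg, abs_mul]
            rw [abs_of_pos (by positivity : (0:ℝ) < (2 * α)⁻¹),
              abs_of_pos (by positivity : (0:ℝ) < (x ^ 2)⁻¹)]
            calc (2 * α)⁻¹ * (x ^ 2)⁻¹ * |Real.sin (α * x ^ 2 + β)|
                ≤ (2 * α)⁻¹ * (x ^ 2)⁻¹ * 1 := by gcongr; exact Real.abs_sin_le_one _
              _ = (2 * α)⁻¹ * (x ^ 2)⁻¹ := mul_one _
        have hval : ∫ x in c..b, (2 * α)⁻¹ * (x ^ 2)⁻¹ = (2 * α)⁻¹ * (c⁻¹ - b⁻¹) := by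
          rw [intervalIntegral.integral_const_mul, hintsq]
        have hfin : (2 * α)⁻¹ * (c⁻¹ - b⁻¹) ≤ 1 / (2 * Real.sqrt α) := by
          have : (2 * α)⁻¹ * (c⁻¹ - b⁻¹) ≤ (2 * α)⁻¹ * c⁻¹ := by
            have hbinv : (0:ℝ) ≤ b⁻¹ := by positivity
            have : c⁻¹ - b⁻¹ ≤ c⁻¹ := by linarith
            exact mul_le_mul_of_nonneg_left this (by positivity)
          linarith [hkey]
        linarith [hle, hmono, hval.le, hval.ge, hfin]
      calc |(2 * α)⁻¹ * b⁻¹ * Real.sin (α * b ^ 2 + β) - (2 * α)⁻¹ * c⁻¹ * Real.sin (α * c ^ 2 + β)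
            - ∫ x in c..b, -((2 * α)⁻¹ * (x ^ 2)⁻¹) * Real.sin (α * x ^ 2 + β)|
          ≤ |(2 * α)⁻¹ * b⁻¹ * Real.sin (α * b ^ 2 + β)| + |(2 * α)⁻¹ * c⁻¹ * Real.sin (α * c ^ 2 + β)|
            + |∫ x in c..b, -((2 * α)⁻¹ * (x ^ 2)⁻¹) * Real.sin (α * x ^ 2 + β)| := by
            apply (abs_sub _ _).trans
            gcongr
            exact abs_sub _ _
        _ ≤ 1 / (2 * Real.sqrt α) + 1 / (2 * Real.sqrt α) + 1 / (2 * Real.sqrt α) :=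
            add_le_add (add_le_add hb1 hc1) hrem
        _ = 3 / (2 * Real.sqrt α) := by ring
  rw [hsplit]
  have hδle : δ ≤ 1 / Real.sqrt α := le_of_eq (by rw [hδ, one_div])
  calc |(∫ u in a..c, Real.cos (α * u ^ 2 + β)) + ∫ u in c..b, Real.cos (α * u ^ 2 + β)|
      ≤ |∫ u in a..c, Real.cos (α * u ^ 2 + β)| + |∫ u in c..b, Real.cos (α * u ^ 2 + β)| := abs_add_le _ _
    _ ≤ δ + 3 / (2 * Real.sqrt α) := add_le_add h1bound h2bound
    _ ≤ 1 / Real.sqrt α + 3 / (2 * Real.sqrt α) := by linarith [hδle]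
    _ ≤ 3 / Real.sqrt α := by
        rw [div_add_div _ _ (ne_of_gt hsα) (by positivity : (2 : ℝ) * Real.sqrt α ≠ 0)]
        rw [div_le_div_iff₀ (by positivity) hsα]
        ring_nf
        nlinarith [hsα]

lemma fresnel_even (α β : ℝ) : ∀ x y : ℝ, (∫ u in x..y, Real.cos (α * u ^ 2 + β))
    = ∫ u in -y..-x, Real.cos (α * u ^ 2 + β) := by
  intro x y
  have := intervalIntegral.integral_comp_neg (a := x) (b := y)
    (fun u => Real.cos (α * u ^ 2 + β))
  simp only [neg_sq] at this
  exact this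

lemma fresnel_le (α β : ℝ) (hα : 0 < α) (a b : ℝ) (hab : a ≤ b) :
    |∫ u in a..b, Real.cos (α * u ^ 2 + β)| ≤ 6 / Real.sqrt α := by
  have hsα : 0 < Real.sqrt α := Real.sqrt_pos.mpr hα
  have hint : ∀ x y : ℝ, IntervalIntegrable (fun u => Real.cos (α * u ^ 2 + β)) volume x y :=
    fun x y => (Real.continuous_cos.comp
      ((continuous_const.mul (continuous_pow 2)).add continuous_const)).intervalIntegrable x y
  have h36 : (3:ℝ) / Real.sqrt α ≤ 6 / Real.sqrt α := by
    gcongr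
    norm_num
  rcases le_or_gt 0 a with ha | ha
  · exact (fresnel_nonneg α β hα a b ha hab).trans h36
  rcases le_or_gt b 0 with hb | hb
  · rw [fresnel_even α β a b]
    have := fresnel_nonneg α β hα (-b) (-a) (by linarith) (by linarith)
    exact this.trans h36
  · have hsplit : (∫ u in a..b, Real.cos (α * u ^ 2 + β))
        = (∫ u in a..(0:ℝ), Real.cos (α * u ^ 2 + β)) + ∫ u in (0:ℝ)..b, Real.cos (α * u ^ 2 + β) :=
      (intervalIntegral.integral_add_adjacent_intervals (hint a 0) (hint 0 b)).symm
    rw [hsplit]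
    have h1 : |∫ u in a..0, Real.cos (α * u ^ 2 + β)| ≤ 3 / Real.sqrt α := by
      rw [fresnel_even α β a 0]
      rw [neg_zero]
      exact fresnel_nonneg α β hα 0 (-a) le_rfl (by linarith)
    have h2 : |∫ u in (0:ℝ)..b, Real.cos (α * u ^ 2 + β)| ≤ 3 / Real.sqrt α :=
      fresnel_nonneg α β hα 0 b le_rfl hb.le
    calc |(∫ u in a..0, Real.cos (α * u ^ 2 + β)) + ∫ u in (0:ℝ)..b, Real.cos (α * u ^ 2 + β)|
        ≤ |∫ u in a..0, Real.cos (α * u ^ 2 + β)| + |∫ u in (0:ℝ)..b, Real.cos (α * u ^ 2 + β)| :=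
          abs_add_le _ _
      _ ≤ 3 / Real.sqrt α + 3 / Real.sqrt α := add_le_add h1 h2
      _ = 6 / Real.sqrt α := by ring

lemma fresnel_bound (α β : ℝ) (hα : 0 < α) (a b : ℝ) :
    |∫ u in a..b, Real.cos (α * u ^ 2 + β)| ≤ 6 / Real.sqrt α := by
  rcases le_total a b with hab | hab
  · exact fresnel_le α β hα a b hab
  · rw [intervalIntegral.integral_symm, abs_neg]
    exact fresnel_le α β hα b a hab

lemma fresnel_shift (α β m : ℝ) (hα : 0 < α) (a b : ℝ) :
    |∫ t in a..b, Real.cos (α * (t - m) ^ 2 + β)| ≤ 6 / Real.sqrt α := by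
  have := intervalIntegral.integral_comp_sub_right
    (fun u => Real.cos (α * u ^ 2 + β)) m (a := a) (b := b)
  rw [this]
  exact fresnel_bound α β hα _ _

lemma conv_repr (r : ℝ) (k : ℕ) (ξ : ℝ) (hξ : ξ ∈ Set.Icc (0:ℝ) 2)
    (h : ℝ → ℝ)
    (hdef : h = Set.indicator (Set.Icc (0 : ℝ) 1)
      (fun t => Real.sqrt 2 * r * Real.sin ((k : ℝ)^2 * t^2))) :
    conv1 h h ξ = 2 * r^2 *
      ∫ t in (max 0 (ξ - 1))..(min 1 ξ),
        Real.sin ((k:ℝ)^2 * (ξ - t)^2) * Real.sin ((k:ℝ)^2 * t^2) := by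
  obtain ⟨hξ0, hξ2⟩ := hξ
  set a : ℝ := max 0 (ξ - 1) with ha
  set b : ℝ := min 1 ξ with hb
  have hab : a ≤ b := max_le (le_min zero_le_one hξ0) (le_min (by linarith) (by linarith))
  have hmem : ∀ t : ℝ, t ∈ Set.Icc a b ↔ (ξ - t ∈ Set.Icc (0:ℝ) 1 ∧ t ∈ Set.Icc (0:ℝ) 1) := by
    intro t
    simp only [ha, hb, Set.mem_Icc, max_le_iff, le_min_iff]
    constructor
    · rintro ⟨⟨h1, h2⟩, h3, h4⟩; exact ⟨⟨by linarith, by linarith⟩, h1, h3⟩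
    · rintro ⟨⟨h1, h2⟩, h3, h4⟩; exact ⟨⟨h3, by linarith⟩, h4, by linarith⟩
  have hfun : (fun t => h (ξ - t) * h t) = Set.indicator (Set.Icc a b)
      (fun t => 2 * r^2 * (Real.sin ((k:ℝ)^2 * (ξ - t)^2) * Real.sin ((k:ℝ)^2 * t^2))) := by
    funext t
    rw [hdef]
    by_cases hab' : t ∈ Set.Icc a b
    · rw [Set.indicator_of_mem hab']
      obtain ⟨h1, h2⟩ := (hmem t).1 hab'
      rw [Set.indicator_of_mem h1, Set.indicator_of_mem h2]
      have hs2 : Real.sqrt 2 * Real.sqrt 2 = 2 := Real.mul_self_sqrt (by norm_num)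
      linear_combination (Real.sin ((k:ℝ)^2 * (ξ - t)^2) * Real.sin ((k:ℝ)^2 * t^2) * r^2) * hs2
    · rw [Set.indicator_of_notMem hab']
      by_cases h1 : ξ - t ∈ Set.Icc (0:ℝ) 1
      · by_cases h2 : t ∈ Set.Icc (0:ℝ) 1
        · exact absurd ((hmem t).2 ⟨h1, h2⟩) hab'
        · rw [Set.indicator_of_notMem h2, mul_zero]
      · rw [Set.indicator_of_notMem h1, zero_mul]
  show (∫ t, h (ξ - t) * h t) = _
  rw [hfun, MeasureTheory.integral_indicator measurableSet_Icc,
    MeasureTheory.integral_Icc_eq_integral_Ioc, ← intervalIntegral.integral_of_le hab,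
    intervalIntegral.integral_const_mul]

lemma conv_abs_bound (r : ℝ) (k : ℕ) (hk : 1 ≤ k) (ξ : ℝ) (hξ : ξ ∈ Set.Icc (0:ℝ) 2)
    (h : ℝ → ℝ)
    (hdef : h = Set.indicator (Set.Icc (0 : ℝ) 1)
      (fun t => Real.sqrt 2 * r * Real.sin ((k : ℝ)^2 * t^2))) :
    |conv1 h h ξ| ≤ 7 * r^2 / k := by
  obtain ⟨hξ0, hξ2⟩ := hξ
  have hk' : (1:ℝ) ≤ (k:ℝ) := by exact_mod_cast hk
  have hkpos : (0:ℝ) < (k:ℝ) := by linarith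
  rw [conv_repr r k ξ ⟨hξ0, hξ2⟩ h hdef]
  set a : ℝ := max 0 (ξ - 1) with ha
  set b : ℝ := min 1 ξ with hb
  have hab : a ≤ b := max_le (le_min zero_le_one hξ0) (le_min (by linarith) (by linarith))
  have hts : ∀ t : ℝ, Real.sin ((k:ℝ)^2 * (ξ - t)^2) * Real.sin ((k:ℝ)^2 * t^2)
      = (Real.cos ((k:ℝ)^2 * ξ^2 + -(2 * (k:ℝ)^2 * ξ) * t)
        - Real.cos (2 * (k:ℝ)^2 * (t - ξ/2)^2 + (k:ℝ)^2 * ξ^2 / 2)) / 2 := by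
    intro t
    have e1 : ((k:ℝ)^2 * ξ^2 + -(2 * (k:ℝ)^2 * ξ) * t
        + (2 * (k:ℝ)^2 * (t - ξ/2)^2 + (k:ℝ)^2 * ξ^2 / 2)) / 2 = (k:ℝ)^2 * (ξ - t)^2 := by ring
    have e2 : ((k:ℝ)^2 * ξ^2 + -(2 * (k:ℝ)^2 * ξ) * t
        - (2 * (k:ℝ)^2 * (t - ξ/2)^2 + (k:ℝ)^2 * ξ^2 / 2)) / 2 = -((k:ℝ)^2 * t^2) := by ring
    rw [Real.cos_sub_cos, e1, e2, Real.sin_neg]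
    ring
  have hi1 : IntervalIntegrable
      (fun t => Real.cos ((k:ℝ)^2 * ξ^2 + -(2 * (k:ℝ)^2 * ξ) * t)) volume a b :=
    ((Real.continuous_cos.comp (continuous_const.add (continuous_const.mul continuous_id)))).intervalIntegrable a b
  have hi2 : IntervalIntegrable
      (fun t => Real.cos (2 * (k:ℝ)^2 * (t - ξ/2)^2 + (k:ℝ)^2 * ξ^2 / 2)) volume a b := by
    apply Continuous.intervalIntegrable
    apply Real.continuous_cos.comp
    apply Continuous.add ?_ continuous_const
    exact continuous_const.mul ((continuous_id.sub continuous_const).pow 2)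
  set I1 : ℝ := ∫ t in a..b, Real.cos ((k:ℝ)^2 * ξ^2 + -(2 * (k:ℝ)^2 * ξ) * t) with hI1def
  set I2 : ℝ := ∫ t in a..b, Real.cos (2 * (k:ℝ)^2 * (t - ξ/2)^2 + (k:ℝ)^2 * ξ^2 / 2) with hI2def
  have hsplit : (∫ t in a..b, Real.sin ((k:ℝ)^2 * (ξ - t)^2) * Real.sin ((k:ℝ)^2 * t^2))
      = (I1 - I2) / 2 := by
    simp only [hts]
    rw [intervalIntegral.integral_div, intervalIntegral.integral_sub hi1 hi2]
  have hI1bound : |I1| ≤ 1 / (k:ℝ) := by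
    rcases le_or_gt (ξ * (k:ℝ)) 1 with hsm | hlg
    · have hξ1 : ξ ≤ 1 := by nlinarith
      have hae : a = 0 := max_eq_left (by linarith)
      have hbe : b = ξ := min_eq_right hξ1
      have hcb := intervalIntegral.norm_integral_le_of_norm_le_const (C := 1)
        (f := fun t => Real.cos ((k:ℝ)^2 * ξ^2 + -(2 * (k:ℝ)^2 * ξ) * t)) (a := a) (b := b)
        (fun x _ => by simpa using Real.abs_cos_le_one _)
      rw [Real.norm_eq_abs] at hcb
      calc |I1| ≤ 1 * |b - a| := hcb
        _ = ξ := by rw [hae, hbe, one_mul, sub_zero, abs_of_nonneg hξ0]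
        _ ≤ 1 / (k:ℝ) := by rw [le_div_iff₀ hkpos]; linarith
    · have hξpos : 0 < ξ := by nlinarith
      have hγpos : (0:ℝ) < 2 * (k:ℝ)^2 * ξ := by positivity
      have hγ : -(2 * (k:ℝ)^2 * ξ) ≠ 0 := by
        simp only [neg_ne_zero]; exact ne_of_gt hγpos
      have hlin := integral_cos_linear ((k:ℝ)^2 * ξ^2) (-(2 * (k:ℝ)^2 * ξ)) a b hγ
      calc |I1| ≤ 2 / |(-(2 * (k:ℝ)^2 * ξ))| := hlin
        _ = 1 / ((k:ℝ)^2 * ξ) := by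
            rw [abs_neg, abs_of_pos hγpos]
            rw [div_eq_div_iff (by positivity) (by positivity)]
            ring
        _ ≤ 1 / (k:ℝ) := by
            apply one_div_le_one_div_of_le hkpos
            nlinarith
  have hI2bound : |I2| ≤ 6 / (k:ℝ) := by
    have hfr := fresnel_shift (2 * (k:ℝ)^2) ((k:ℝ)^2 * ξ^2 / 2) (ξ/2) (by positivity) a b
    have hsq : (k:ℝ) ≤ Real.sqrt (2 * (k:ℝ)^2) := by
      rw [show (2 : ℝ) * (k:ℝ)^2 = ((k:ℝ) * Real.sqrt 2)^2 by
        rw [mul_pow, Real.sq_sqrt (by norm_num : (0:ℝ) ≤ 2)]; ring]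
      rw [Real.sqrt_sq (by positivity)]
      nlinarith [Real.sqrt_le_sqrt (by norm_num : (1:ℝ) ≤ 2), Real.sqrt_one,
        Real.sqrt_nonneg (2:ℝ)]
    calc |I2| ≤ 6 / Real.sqrt (2 * (k:ℝ)^2) := hfr
      _ ≤ 6 / (k:ℝ) := by
          apply div_le_div_of_nonneg_left (by norm_num) hkpos hsq
  have habs : |2 * r^2 * ((I1 - I2) / 2)| = r^2 * |I1 - I2| := by
    rw [abs_mul, abs_div, abs_of_nonneg (by positivity : (0:ℝ) ≤ 2 * r^2),
      abs_of_nonneg (by norm_num : (0:ℝ) ≤ (2:ℝ))]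
    ring
  rw [hsplit, habs]
  calc r^2 * |I1 - I2| ≤ r^2 * (1 / (k:ℝ) + 6 / (k:ℝ)) :=
      mul_le_mul_of_nonneg_left ((abs_sub _ _).trans (add_le_add hI1bound hI2bound))
        (by positivity)
    _ = 7 * r^2 / (k:ℝ) := by field_simp; ring

theorem autoconv_sin_sequence_to_zero (r : ℝ) (hr : 0 < r)
    (h : ℕ → ℝ → ℝ)
    (hdef : ∀ k, h k = Set.indicator (Set.Icc (0 : ℝ) 1)
      (fun t => Real.sqrt 2 * r * Real.sin ((k : ℝ)^2 * t^2))) :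
    (∃ C > (0 : ℝ), ∀ k : ℕ, 1 ≤ k → ∀ ξ ∈ Set.Icc (0 : ℝ) 2,
      |conv1 (h k) (h k) ξ| ≤ C / (k : ℝ)) ∧
    Tendsto (fun k => eLpNorm (conv1 (h k) (h k)) 2 (volume.restrict (Set.Icc (0 : ℝ) 2)))
      atTop (nhds 0) := by
  have hbound : ∀ k : ℕ, 1 ≤ k → ∀ ξ ∈ Set.Icc (0 : ℝ) 2,
      |conv1 (h k) (h k) ξ| ≤ 7 * r^2 / (k : ℝ) :=
    fun k hk ξ hξ => conv_abs_bound r k hk ξ hξ (h k) (hdef k)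
  refine ⟨⟨7 * r^2, by positivity, hbound⟩, ?_⟩
  set C : ℝ := 7 * r^2 with hC
  have hupper : ∀ k : ℕ, 1 ≤ k →
      eLpNorm (conv1 (h k) (h k)) 2 (volume.restrict (Set.Icc (0 : ℝ) 2))
      ≤ (volume (Set.Icc (0:ℝ) 2)) ^ ((2:ENNReal).toReal⁻¹) * ENNReal.ofReal (C / k) := by
    intro k hk
    have hae : ∀ᵐ ξ ∂(volume.restrict (Set.Icc (0:ℝ) 2)), ‖conv1 (h k) (h k) ξ‖ ≤ C / k :=
      (ae_restrict_iff' measurableSet_Icc).2 (ae_of_all _ (fun ξ hξ => by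
        simpa [Real.norm_eq_abs] using hbound k hk ξ hξ))
    have := MeasureTheory.eLpNorm_le_of_ae_bound (p := 2) hae
    simpa [Measure.restrict_apply_univ] using this
  have hconst_ne_top : (volume (Set.Icc (0:ℝ) 2)) ^ ((2:ENNReal).toReal⁻¹) ≠ ⊤ := by
    apply ENNReal.rpow_ne_top_of_nonneg (by norm_num)
    rw [Real.volume_Icc]
    exact ENNReal.ofReal_ne_top
  have htend : Tendsto (fun k : ℕ =>
      (volume (Set.Icc (0:ℝ) 2)) ^ ((2:ENNReal).toReal⁻¹) * ENNReal.ofReal (C / k))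
      atTop (nhds 0) := by
    have h1 : Tendsto (fun k : ℕ => ENNReal.ofReal (C / k)) atTop (nhds 0) := by
      have h0 : Tendsto (fun k : ℕ => C / (k:ℝ)) atTop (nhds 0) :=
        tendsto_const_div_atTop_nhds_zero_nat C
      have := (ENNReal.tendsto_ofReal h0)
      simpa using this
    have := ENNReal.Tendsto.const_mul h1 (Or.inr hconst_ne_top)
    simpa using this
  apply tendsto_of_tendsto_of_tendsto_of_le_of_le' tendsto_const_nhds htend
  · exact Filter.Eventually.of_forall (fun k => zero_le)
  · filter_upwards [Filter.eventually_ge_atTop 1] with k hk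
    exact hupper k hk
end
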